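/- For all integers n, k with n ≥ k ≥ 0 and every nonzero real λ, the unsigned new type degenerate Stirling number of the first kind satisfies [n,k]*_λ = ∑_{m=k}^{n} λ^{n-m} · [n,m] · [m,k], where [n,m] and [m,k] denote the classical unsigned Stirling numbers of the first kind. -/

import Mathlib

open Finset

/-- The unsigned Stirling numbers of the first kind, defined by the recurrence
`⎡n+1, k+1⎤ = n·⎡n, k+1⎤ + ⎡n, k⎤` with `⎡0,0⎤ = 1`. -/
def stirling1 : ℕ → ℕ → ℕ
  | 0, 0 => 1
  | 0, _ + 1 => 0
  | _ + 1, 0 => 0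
  | n + 1, k + 1 => n * stirling1 n (k + 1) + stirling1 n k

lemma stirling1_le (n : ℕ) : ∀ k, stirling1 n k ≤ n.factorial := by
  induction n with
  | zero => intro k; cases k <;> simp [stirling1]
  | succ n ih =>
    intro k
    cases k with
    | zero => simp [stirling1]
    | succ k =>
      show n * stirling1 n (k+1) + stirling1 n k ≤ (n+1) * n.factorial
      calc n * stirling1 n (k+1) + stirling1 n k ≤ n * n.factorial + n.factorial :=
            Nat.add_le_add (Nat.mul_le_mul_left _ (ih _)) (ih _)
        _ = (n+1) * n.factorial := by ring

lemma stirling1_eq_zero_of_lt : ∀ n k, n < k → stirling1 n k = 0 := by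
  intro n
  induction n with
  | zero =>
    intro k hk
    cases k with
    | zero => omega
    | succ k => rfl
  | succ n ih =>
    intro k hk
    cases k with
    | zero => omega
    | succ k =>
      show n * stirling1 n (k+1) + stirling1 n k = 0
      rw [ih (k+1) (by omega), ih k (by omega)]; simp

lemma abs_stirling_term_le (k n : ℕ) (u : ℝ) :
    |(stirling1 n k : ℝ) * u ^ n / n.factorial| ≤ |u| ^ n := by
  rw [abs_div, abs_mul, abs_pow, Nat.abs_cast, Nat.abs_cast]
  rw [div_le_iff₀ (by positivity)]
  calc (stirling1 n k : ℝ) * |u| ^ n ≤ (n.factorial : ℝ) * |u| ^ n := by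
        gcongr; exact_mod_cast stirling1_le n k
    _ = |u| ^ n * n.factorial := by ring

lemma summable_stirling1 (k : ℕ) {u : ℝ} (hu : |u| < 1) :
    Summable (fun n : ℕ => (stirling1 n k : ℝ) * u ^ n / n.factorial) := by
  apply Summable.of_norm_bounded (summable_geometric_of_lt_one (abs_nonneg u) hu)
  intro n
  rw [Real.norm_eq_abs]
  exact abs_stirling_term_le k n u

lemma summable_deriv_stirling1 {r : ℝ} (hr : |r| < 1) :
    Summable (fun n : ℕ => (n : ℝ) * |r| ^ (n - 1)) := by
  rw [← summable_nat_add_iff 1]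
  have h1 : Summable (fun n : ℕ => (n : ℝ) * |r| ^ n) := by
    have := summable_pow_mul_geometric_of_norm_lt_one 1
      (show ‖|r|‖ < 1 by rwa [Real.norm_eq_abs, abs_abs])
    simpa using this
  have h2 : Summable (fun n : ℕ => |r| ^ n) :=
    summable_geometric_of_lt_one (abs_nonneg r) hr
  have h3 := h1.add h2
  convert h3 using 1
  · rfl
  funext n
  rw [Nat.add_sub_cancel]
  push_cast
  ring

lemma stirling_deriv_term_bound (k n : ℕ) (y : ℝ) {r : ℝ} (hyr : |y| ≤ |r|) :
    ‖(stirling1 n k : ℝ) * ((n : ℝ) * y ^ (n - 1)) / n.factorial‖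
      ≤ (n : ℝ) * |r| ^ (n - 1) := by
  rw [Real.norm_eq_abs, abs_div, abs_mul, abs_mul, Nat.abs_cast, Nat.abs_cast,
    Nat.abs_cast, abs_pow]
  rw [div_le_iff₀ (by positivity)]
  calc (stirling1 n k : ℝ) * ((n:ℝ) * |y| ^ (n-1))
      ≤ (n.factorial : ℝ) * ((n:ℝ) * |r| ^ (n-1)) := by
        gcongr <;> first
          | exact_mod_cast stirling1_le n k
          | exact hyr
          | positivity
    _ = (n:ℝ) * |r| ^ (n-1) * n.factorial := by ring

theorem stirling1_hasSum : ∀ (k : ℕ) {u : ℝ}, |u| < 1 →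
    HasSum (fun n : ℕ => (stirling1 n k : ℝ) * u ^ n / n.factorial)
      ((1 / (k.factorial : ℝ)) * (-Real.log (1 - u)) ^ k) := by
  intro k
  induction k with
  | zero =>
    intro u hu
    have : (fun n : ℕ => (stirling1 n 0 : ℝ) * u ^ n / n.factorial)
        = fun n => if n = 0 then 1 else 0 := by
      funext n
      cases n with
      | zero => simp [stirling1]
      | succ n => simp [stirling1]
    rw [this]
    simpa using hasSum_ite_eq (0 : ℕ) (1 : ℝ)
  | succ k ih =>
    have main : ∀ {u : ℝ}, |u| < 1 →
        (∑' n : ℕ, (stirling1 n (k+1) : ℝ) * u ^ n / n.factorial)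
          = (1 / ((k+1).factorial : ℝ)) * (-Real.log (1 - u)) ^ (k+1) := by
      have hderiv : ∀ {u : ℝ}, |u| < 1 →
          HasDerivAt (fun u => ∑' n : ℕ, (stirling1 n (k+1) : ℝ) * u ^ n / n.factorial)
          (((1 / (k.factorial : ℝ)) * (-Real.log (1 - u)) ^ k) / (1 - u)) u := by
        intro u hu
        obtain ⟨r, hur, hr1⟩ := exists_between hu
        have hr0 : 0 < r := lt_of_le_of_lt (abs_nonneg u) hur
        have hr1' : |r| < 1 := by rwa [abs_of_pos hr0]
        have hmem : u ∈ Metric.ball (0:ℝ) r := by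
          simpa [Real.dist_eq] using hur
        have key : HasDerivAt
            (fun u => ∑' n : ℕ, (stirling1 n (k+1) : ℝ) * u ^ n / n.factorial)
            (∑' n : ℕ, (stirling1 n (k+1) : ℝ) * ((n : ℝ) * u ^ (n - 1)) / n.factorial) u := by
          apply hasDerivAt_tsum_of_isPreconnected (F := ℝ)
            (u := fun n : ℕ => (n : ℝ) * |r| ^ (n - 1))
            (g := fun (n : ℕ) (y : ℝ) => (stirling1 n (k+1) : ℝ) * y ^ n / n.factorial)
            (g' := fun (n : ℕ) (y : ℝ) =>
              (stirling1 n (k+1) : ℝ) * ((n : ℝ) * y ^ (n - 1)) / n.factorial)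
            (summable_deriv_stirling1 hr1') Metric.isOpen_ball
            ((convex_ball (0:ℝ) r).isPreconnected) ?_ ?_
            (Metric.mem_ball_self hr0) ?_ hmem
          · intro n y _
            simpa [mul_div_assoc] using
              ((hasDerivAt_pow n y).const_mul ((stirling1 n (k+1) : ℝ))).div_const
                (n.factorial : ℝ)
          · intro n y hy
            apply stirling_deriv_term_bound
            rw [Metric.mem_ball, Real.dist_eq, sub_zero] at hy
            exact hy.le.trans (le_abs_self r)
          · exact summable_stirling1 (k+1) (by simpa [abs_of_pos hr0] using hr1')
        set D := ∑' n : ℕ, (stirling1 n (k+1) : ℝ) * ((n : ℝ) * u ^ (n - 1)) / n.factorial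
          with hD
        have hsumd : Summable (fun n : ℕ =>
            (stirling1 n (k+1) : ℝ) * ((n : ℝ) * u ^ (n - 1)) / n.factorial) := by
          apply Summable.of_norm_bounded (summable_deriv_stirling1 hu)
          intro n
          exact stirling_deriv_term_bound (k+1) n u (le_refl _)
        have hd : HasSum (fun n : ℕ =>
            (stirling1 n (k+1) : ℝ) * ((n : ℝ) * u ^ (n - 1)) / n.factorial) D :=
          hsumd.hasSum
        have hf0 : (stirling1 0 (k+1) : ℝ) * ((0 : ℝ) * u ^ (0 - 1)) / (0).factorial = 0 := by
          simp
        have hshift : HasSum (fun m : ℕ =>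
            (stirling1 (m+1) (k+1) : ℝ) * (((m:ℝ)+1) * u ^ m) / ((m+1).factorial)) D := by
          have hs' : HasSum (fun m : ℕ =>
              (stirling1 (m+1) (k+1) : ℝ) * (((m+1 : ℕ) : ℝ) * u ^ ((m+1) - 1))
                / ((m+1).factorial)) D := by
            rw [hasSum_nat_add_iff (f := fun n : ℕ =>
              (stirling1 n (k+1) : ℝ) * ((n : ℝ) * u ^ (n - 1)) / n.factorial) 1]
            simpa [hf0] using hd
          convert hs' using 2 with m
          rw [Nat.add_sub_cancel]
          push_cast
          ring
        have hshift2 : HasSum (fun m : ℕ =>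
            u * ((stirling1 m (k+1) : ℝ) * ((m : ℝ) * u ^ (m - 1)) / m.factorial)
              + (stirling1 m k : ℝ) * u ^ m / m.factorial) D := by
          convert hshift using 2 with m
          have hrec : (stirling1 (m+1) (k+1) : ℝ)
              = m * stirling1 m (k+1) + stirling1 m k := by
            push_cast [stirling1]; ring
          rw [hrec]
          cases m with
          | zero => simp
          | succ m =>
            rw [Nat.add_sub_cancel]
            have hfact : (((m+1)+1).factorial : ℝ) = (((m:ℝ)+1)+1) * (m+1).factorial := by
              push_cast [Nat.factorial_succ]; ring
            rw [hfact]
            have hfne : ((m+1).factorial : ℝ) ≠ 0 := by positivity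
            field_simp
            push_cast
            ring
        have hsum2 : HasSum (fun m : ℕ =>
            u * ((stirling1 m (k+1) : ℝ) * ((m : ℝ) * u ^ (m - 1)) / m.factorial)
              + (stirling1 m k : ℝ) * u ^ m / m.factorial)
            (u * D + (1 / (k.factorial : ℝ)) * (-Real.log (1 - u)) ^ k) :=
          (hd.mul_left u).add (ih hu)
        have hDeq : D = u * D + (1 / (k.factorial : ℝ)) * (-Real.log (1 - u)) ^ k :=
          hshift2.unique hsum2
        have h1u : (1 : ℝ) - u ≠ 0 := by
          intro h
          have : u = 1 := by linarith
          rw [this] at hu; norm_num at hu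
        have h2 : D * (1 - u) = (1 / (k.factorial : ℝ)) * (-Real.log (1 - u)) ^ k := by
          linear_combination hDeq
        have hDval : D = ((1 / (k.factorial : ℝ)) * (-Real.log (1 - u)) ^ k) / (1 - u) := by
          rw [eq_div_iff h1u]; exact h2
        rw [← hDval]
        exact key
      -- target derivative
      have htderiv : ∀ {u : ℝ}, |u| < 1 →
          HasDerivAt (fun u => (1 / ((k+1).factorial : ℝ)) * (-Real.log (1 - u)) ^ (k+1))
          (((1 / (k.factorial : ℝ)) * (-Real.log (1 - u)) ^ k) / (1 - u)) u := by
        intro u hu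
        have h1u : (0:ℝ) < 1 - u := by
          have := abs_lt.1 hu
          linarith [this.2]
        have hlog : HasDerivAt (fun u : ℝ => -Real.log (1 - u)) (1 / (1 - u)) u := by
          have h1 : HasDerivAt (fun u : ℝ => 1 - u) (-1) u := by
            simpa using (hasDerivAt_id u).const_sub 1
          have := (Real.hasDerivAt_log (ne_of_gt h1u)).comp u h1
          convert this.neg using 1
          · rfl
          · rfl
          · rfl
          field_simp
        have hp := (hlog.pow (k+1)).const_mul (1 / ((k+1).factorial : ℝ))
        convert hp using 1
        · rfl
        · rfl
        · rfl
        rw [Nat.add_sub_cancel]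
        have : ((k+1).factorial : ℝ) = ((k:ℝ)+1) * k.factorial := by
          push_cast [Nat.factorial_succ]; ring
        rw [this]
        have hkf : (k.factorial : ℝ) ≠ 0 := by positivity
        field_simp
        push_cast
        ring
      -- equality on Ioo
      intro u hu
      have hIoo : u ∈ Set.Ioo (-1:ℝ) 1 := abs_lt.1 hu
      have heq : Set.EqOn (fun u => ∑' n : ℕ, (stirling1 n (k+1) : ℝ) * u ^ n / n.factorial)
          (fun u => (1 / ((k+1).factorial : ℝ)) * (-Real.log (1 - u)) ^ (k+1))
          (Set.Ioo (-1:ℝ) 1) := by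
        have hop : IsOpen (Set.Ioo (-1:ℝ) 1) := isOpen_Ioo
        refine (convex_Ioo (-1:ℝ) 1).eqOn_of_fderivWithin_eq
          (𝕜 := ℝ) ?_ ?_ hop.uniqueDiffOn ?_
          (show (0:ℝ) ∈ Set.Ioo (-1:ℝ) 1 by norm_num) ?_
        · intro x hx
          exact ((hderiv (abs_lt.2 (Set.mem_Ioo.1 hx))).differentiableAt.differentiableWithinAt)
        · intro x hx
          exact ((htderiv (abs_lt.2 (Set.mem_Ioo.1 hx))).differentiableAt.differentiableWithinAt)
        · intro x hx
          rw [fderivWithin_of_isOpen hop hx, fderivWithin_of_isOpen hop hx,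
            (hderiv (abs_lt.2 (Set.mem_Ioo.1 hx))).hasFDerivAt.fderiv,
            (htderiv (abs_lt.2 (Set.mem_Ioo.1 hx))).hasFDerivAt.fderiv]
        · have h0 : ∀ n : ℕ, (stirling1 n (k+1) : ℝ) * (0:ℝ) ^ n / n.factorial = 0 := by
            intro n
            cases n with
            | zero => simp [stirling1_eq_zero_of_lt 0 (k+1) (by omega)]
            | succ n => simp
          show (∑' n : ℕ, (stirling1 n (k+1) : ℝ) * (0:ℝ) ^ n / n.factorial) = _
          rw [tsum_eq_single 0 (fun n _ => h0 n), h0 0]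
          simp
      exact heq hIoo
    intro u hu
    have := (summable_stirling1 (k+1) hu).hasSum
    rwa [main hu] at this


open FormalMultilinearSeries

lemma hasFPowerSeriesAt_of_hasSum {c : ℕ → ℝ} {f : ℝ → ℝ} {ε : ℝ} (hε : 0 < ε)
    (h : ∀ t : ℝ, |t| < ε → HasSum (fun n => c n * t ^ n) (f t)) :
    HasFPowerSeriesAt f (FormalMultilinearSeries.ofScalars ℝ c) 0 := by
  set r : ℝ := ε / 2 with hr
  have hr0 : 0 < r := by positivity
  have hrε : r < ε := by simp [hr]; linarith
  set rn : NNReal := ⟨r, hr0.le⟩ with hrn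
  have hradius : ENNReal.ofReal r ≤ (FormalMultilinearSeries.ofScalars ℝ c).radius := by
    have hsum : Summable (fun n => c n * r ^ n) :=
      (h r (by rwa [abs_of_pos hr0])).summable
    have htend : Filter.Tendsto (fun n => c n * r ^ n) Filter.atTop (nhds 0) :=
      hsum.tendsto_atTop_zero
    have hbig : (fun n => ‖FormalMultilinearSeries.ofScalars ℝ c n‖ * (rn : ℝ) ^ n)
        =O[Filter.atTop] (fun _ => (1 : ℝ)) := by
      have : (fun n => ‖FormalMultilinearSeries.ofScalars ℝ c n‖ * r ^ n)
          = fun n => |c n * r ^ n| := by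
        funext n
        rw [FormalMultilinearSeries.ofScalars_norm, Real.norm_eq_abs, abs_mul, abs_pow,
          abs_of_pos hr0]
      rw [show ((rn : NNReal) : ℝ) = r from rfl, this]
      exact (htend.abs.isBigO_one ℝ).congr_left (fun n => (Real.norm_eq_abs _) ▸ rfl)
    have := (FormalMultilinearSeries.ofScalars ℝ c).le_radius_of_isBigO hbig
    rwa [show ((rn : NNReal) : ENNReal) = ENNReal.ofReal r by
      rw [ENNReal.ofReal_eq_coe_nnreal hr0.le]; rfl] at this
  refine ⟨ENNReal.ofReal r, ?_⟩
  refine ⟨hradius, by simpa using hr0, ?_⟩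
  intro y hy
  have hyr : |y| < r := by
    rw [EMetric.mem_ball, edist_dist, Real.dist_eq, sub_zero] at hy
    rwa [← ENNReal.ofReal_lt_ofReal_iff_of_nonneg (abs_nonneg y)]
  have := h y (hyr.trans hrε)
  rw [zero_add]
  convert this using 2 with n
  · rfl
  rw [FormalMultilinearSeries.ofScalars_apply_eq]
  simp [smul_eq_mul, mul_comm]

lemma coeff_unique {c c' : ℕ → ℝ} {f : ℝ → ℝ} {ε ε' : ℝ} (hε : 0 < ε) (hε' : 0 < ε')
    (h : ∀ t : ℝ, |t| < ε → HasSum (fun n => c n * t ^ n) (f t))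
    (h' : ∀ t : ℝ, |t| < ε' → HasSum (fun n => c' n * t ^ n) (f t)) : c = c' := by
  have h1 := hasFPowerSeriesAt_of_hasSum hε h
  have h2 := hasFPowerSeriesAt_of_hasSum hε' h'
  have := h1.eq_formalMultilinearSeries h2
  exact FormalMultilinearSeries.ofScalars_series_injective (𝕜 := ℝ) ℝ this

lemma abs_log_one_sub_le {x : ℝ} (hx : |x| < 1) :
    |Real.log (1 - x)| ≤ -Real.log (1 - |x|) := by
  have h1 : 0 < 1 - |x| := by linarith
  have h2 : 0 < 1 - x := by have := abs_lt.1 hx; linarith [this.2]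
  rw [abs_le]
  constructor
  · have : Real.log (1 - |x|) ≤ Real.log (1 - x) :=
      Real.log_le_log h1 (by have := le_abs_self x; linarith [neg_abs_le x])
    linarith
  · have hle : 1 - x ≤ 1 / (1 - |x|) := by
      rw [le_div_iff₀ h1]
      nlinarith [abs_nonneg x, sq_abs x, neg_abs_le x]
    have := Real.log_le_log h2 hle
    rwa [Real.log_div one_ne_zero (ne_of_gt h1), Real.log_one, zero_sub] at this

lemma neg_log_one_sub_nonneg {x : ℝ} (h0 : 0 ≤ x) (h1 : x < 1) :
    0 ≤ -Real.log (1 - x) := by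
  have : Real.log (1 - x) ≤ 0 := Real.log_nonpos (by linarith) (by linarith)
  linarith

/-- **Theorem 2.1.** For a nonzero real `λ`, if `A n k = ⎡n, k⎤*_λ` are the unsigned new type
degenerate Stirling numbers of the first kind, defined by the power series expansion
`(1/k!)·log^k(1/(1 + (1/λ)·log(1 - λt))) = ∑_{n=k}^∞ ⎡n, k⎤*_λ · tⁿ/n!`, then for all
`n ≥ k ≥ 0` one has `⎡n, k⎤*_λ = ∑_{m=k}^n λ^{n-m} ⎡n, m⎤ ⎡m, k⎤`. -/
theorem new_type_deg_stirling1_eq_sum (lam : ℝ) (hlam : lam ≠ 0) (A : ℕ → ℕ → ℝ)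
    (hA : ∀ k : ℕ, ∃ ε > 0, ∀ t : ℝ, |t| < ε →
      HasSum (fun j : ℕ => A (j + k) k * t ^ (j + k) / (Nat.factorial (j + k) : ℝ))
        ((1 / (Nat.factorial k : ℝ)) *
          (Real.log (1 / (1 + (1 / lam) * Real.log (1 - lam * t)))) ^ k))
    (n k : ℕ) (hkn : k ≤ n) :
    A n k = ∑ m ∈ Finset.Icc k n,
      lam ^ (n - m) * (stirling1 n m : ℝ) * (stirling1 m k : ℝ) := by
  classical
  set f : ℝ → ℝ := fun t => (1 / (Nat.factorial k : ℝ)) *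
      (Real.log (1 / (1 + (1 / lam) * Real.log (1 - lam * t)))) ^ k with hf
  set cA : ℕ → ℝ := fun N => if k ≤ N then A N k / N.factorial else 0 with hcA
  set cB : ℕ → ℝ := fun N => (∑ m ∈ Finset.Icc k N,
      lam ^ (N - m) * (stirling1 N m : ℝ) * (stirling1 m k : ℝ)) / N.factorial with hcB
  obtain ⟨ε, hε, hAsum⟩ := hA k
  -- A side
  have hAside : ∀ t : ℝ, |t| < ε → HasSum (fun N => cA N * t ^ N) (f t) := by
    intro t ht
    have hinj : Function.Injective (fun j : ℕ => j + k) := add_left_injective k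
    rw [← Function.Injective.hasSum_iff hinj]
    · have h := hAsum t ht
      convert h using 2 with j
      simp only [hcA, Function.comp]
      rw [if_pos (Nat.le_add_left k j)]
      ring
    · intro N hN
      have hNk : N < k := by
        by_contra hc
        push_neg at hc
        exact hN ⟨N - k, show N - k + k = N by omega⟩
      simp only [hcA, if_neg (by omega : ¬ k ≤ N), zero_mul]
  -- B side
  set ε' : ℝ := (1 - Real.exp (-|lam|)) / |lam| with hε'def
  have hlam' : 0 < |lam| := abs_pos.2 hlam
  have hexp1 : Real.exp (-|lam|) < 1 := by
    rw [Real.exp_lt_one_iff]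
    linarith
  have hε' : 0 < ε' := by
    apply div_pos
    · linarith
    · exact hlam'
  have hBside : ∀ t : ℝ, |t| < ε' → HasSum (fun N => cB N * t ^ N) (f t) := by
    intro t ht
    -- basic bounds
    have hlt : |lam| * |t| < 1 - Real.exp (-|lam|) := by
      rw [hε'def] at ht
      calc |lam| * |t| < |lam| * ((1 - Real.exp (-|lam|)) / |lam|) := by
            apply mul_lt_mul_of_pos_left ht hlam'
        _ = 1 - Real.exp (-|lam|) := by field_simp
    have hlt1 : |lam| * |t| < 1 := by
      have : Real.exp (-|lam|) > 0 := Real.exp_pos _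
      linarith
    have hlamt : |lam * t| < 1 := by rwa [abs_mul]
    have hlamt0 : 0 ≤ |lam| * |t| := by positivity
    set Mt : ℝ := -(Real.log (1 - lam * t)) / lam with hMt
    set Mabs : ℝ := -(Real.log (1 - |lam| * |t|)) / |lam| with hMabs
    have hMabs0 : 0 ≤ Mabs := by
      apply div_nonneg _ hlam'.le
      exact neg_log_one_sub_nonneg hlamt0 hlt1
    have hMabs1 : Mabs < 1 := by
      rw [hMabs, div_lt_one hlam', neg_lt]
      have : Real.exp (-|lam|) < 1 - |lam| * |t| := by linarith
      calc -|lam| = Real.log (Real.exp (-|lam|)) := (Real.log_exp _).symm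
        _ < Real.log (1 - |lam| * |t|) := Real.log_lt_log (Real.exp_pos _) this
    have hMtle : |Mt| ≤ Mabs := by
      rw [hMt, hMabs, abs_div, abs_neg]
      gcongr
      have h := abs_log_one_sub_le hlamt
      rwa [abs_mul] at h
    have hMt1 : |Mt| < 1 := lt_of_le_of_lt hMtle hMabs1
    -- the double-indexed family, first coordinate n, second m
    set F : ℕ × ℕ → ℝ := fun p =>
      (stirling1 p.2 k : ℝ) * (lam ^ p.1 / lam ^ p.2) * (stirling1 p.1 p.2 : ℝ)
        * t ^ p.1 / p.1.factorial with hF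
    -- absolute value rows (fixed m, sum over n)
    have habs : ∀ p : ℕ × ℕ, |F p| = (stirling1 p.2 k : ℝ) / |lam| ^ p.2
        * ((stirling1 p.1 p.2 : ℝ) * (|lam| * |t|) ^ p.1 / p.1.factorial) := by
      intro p
      rw [hF]
      simp only [abs_div, abs_mul, abs_pow, abs_abs, Nat.abs_cast]
      rw [mul_pow]
      ring
    have habs_row : ∀ m : ℕ, HasSum (fun n => |F (n, m)|)
        ((stirling1 m k : ℝ) * Mabs ^ m / m.factorial) := by
      intro m
      have h := (stirling1_hasSum m (show |(|lam| * |t|)| < 1 by rwa [abs_of_nonneg hlamt0]))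
        |>.mul_left ((stirling1 m k : ℝ) / |lam| ^ m)
      have heq : (stirling1 m k : ℝ) / |lam| ^ m
          * ((1 / (m.factorial : ℝ)) * (-Real.log (1 - |lam| * |t|)) ^ m)
          = (stirling1 m k : ℝ) * Mabs ^ m / m.factorial := by
        have h1 : (|lam| ^ m) ≠ 0 := by positivity
        have h2 : (m.factorial : ℝ) ≠ 0 := by positivity
        rw [hMabs, div_pow]
        field_simp
      rw [heq] at h
      convert h using 2 with n
      · rfl
      exact habs (n, m)
    have hsum_cols : Summable (fun m => (stirling1 m k : ℝ) * Mabs ^ m / m.factorial) :=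
      summable_stirling1 k (by rwa [abs_of_nonneg hMabs0])
    have hFabs : Summable (fun p : ℕ × ℕ => |F (p.2, p.1)|) := by
      rw [summable_prod_of_nonneg (fun p => abs_nonneg _)]
      constructor
      · intro m
        exact (habs_row m).summable
      · apply hsum_cols.congr
        intro m
        exact ((habs_row m).tsum_eq).symm
    have hFsummable : Summable F := by
      have h2 := hFabs.comp_injective (Equiv.prodComm ℕ ℕ).injective
      have h3 : Summable (fun p : ℕ × ℕ => |F p|) := by
        apply h2.congr
        intro p
        simp [Equiv.prodComm]
      exact summable_abs_iff.mp h3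
    set S : ℝ := ∑' p : ℕ × ℕ, F p with hS
    have hFsum : HasSum F S := hFsummable.hasSum
    -- group by second coordinate: value f t
    have hFswap : HasSum (fun p : ℕ × ℕ => F (p.2, p.1)) S := by
      exact ((Equiv.prodComm ℕ ℕ).hasSum_iff).2 hFsum
    have hrow : ∀ m : ℕ, HasSum (fun n => F (n, m))
        ((stirling1 m k : ℝ) * Mt ^ m / m.factorial) := by
      intro m
      have h := (stirling1_hasSum m hlamt).mul_left ((stirling1 m k : ℝ) / lam ^ m)
      have heq : (stirling1 m k : ℝ) / lam ^ m
          * ((1 / (m.factorial : ℝ)) * (-Real.log (1 - lam * t)) ^ m)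
          = (stirling1 m k : ℝ) * Mt ^ m / m.factorial := by
        have hlm : (lam ^ m) ≠ 0 := pow_ne_zero _ hlam
        have h2 : (m.factorial : ℝ) ≠ 0 := by positivity
        rw [hMt, div_pow]
        field_simp
      rw [heq] at h
      convert h using 2 with n
      · rfl
      rw [hF]
      simp only [abs_div]
      rw [mul_pow]
      ring
    have hcolsum : HasSum (fun m => (stirling1 m k : ℝ) * Mt ^ m / m.factorial) S :=
      hFswap.prod_fiberwise hrow
    have hcolval : HasSum (fun m => (stirling1 m k : ℝ) * Mt ^ m / m.factorial) (f t) := by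
      have h := stirling1_hasSum k hMt1
      have hfval : f t = (1 / (k.factorial : ℝ)) * (-Real.log (1 - Mt)) ^ k := by
        have h1 : (1 : ℝ) + (1 / lam) * Real.log (1 - lam * t) = 1 - Mt := by
          rw [hMt]; field_simp; ring
        show (1 / (Nat.factorial k : ℝ)) *
          (Real.log (1 / (1 + (1 / lam) * Real.log (1 - lam * t)))) ^ k = _
        rw [h1, one_div (1 - Mt), Real.log_inv]
      rw [hfval]
      exact h
    have hSft : S = f t := hcolsum.unique hcolval
    -- group by first coordinate: value cB N * t ^ N
    have hrowN : ∀ N : ℕ, HasSum (fun m => F (N, m)) (cB N * t ^ N) := by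
      intro N
      have hfin : ∀ m ∉ Finset.range (N + 1), F (N, m) = 0 := by
        intro m hm
        rw [Finset.mem_range, not_lt] at hm
        rw [hF]
        simp only
        rw [stirling1_eq_zero_of_lt N m (by omega)]
        push_cast
        ring
      have h : HasSum (fun m => F (N, m)) _ := hasSum_sum_of_ne_finset_zero hfin
      convert h using 1
      have hsub : Finset.Icc k N ⊆ Finset.range (N+1) := by
        intro m hm
        rw [Finset.mem_Icc] at hm
        rw [Finset.mem_range]
        omega
      have hvan : ∀ m ∈ Finset.range (N+1), m ∉ Finset.Icc k N → F (N, m) = 0 := by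
        intro m hm hmn
        rw [Finset.mem_range] at hm
        rw [Finset.mem_Icc] at hmn
        have hmk : m < k := by omega
        rw [hF]
        simp only
        rw [stirling1_eq_zero_of_lt m k hmk]
        push_cast
        ring
      rw [hcB]
      simp only
      rw [div_mul_eq_mul_div, Finset.sum_mul, Finset.sum_div,
        ← Finset.sum_subset hsub hvan]
      apply Finset.sum_congr rfl
      intro m hm
      rw [Finset.mem_Icc] at hm
      rw [hF]
      simp only
      rw [show lam ^ N / lam ^ m = lam ^ (N - m) by
        rw [div_eq_iff (pow_ne_zero _ hlam), ← pow_add]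
        congr 1
        omega]
      ring
    have := hFsum.prod_fiberwise hrowN
    rwa [hSft] at this
  have := coeff_unique hε hε' hAside hBside
  have hn := congrFun this n
  simp only [hcA, hcB, if_pos hkn] at hn
  have hfac : (n.factorial : ℝ) ≠ 0 := by positivity
  field_simp at hn
  exact hn
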